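/- Let Λ be a finite subset of ℤ², q ∈ ℕ and λ > 0, and let π^{ω_q}_{λ,Λ} be the Widom-Rowlinson distribution on {0,1,…,q}^Λ with q types, activity λ and boundary condition all-q on ∂Λ. Define f : {0,…,q}^Λ → {0,1}^Λ by (f(θ))(x) = 0 if θ(x) = 0 and (f(θ))(x) = 1 otherwise, and let p = λ/(1+λ). Then the push-forward measure f_* π^{ω_q}_{λ,Λ} equals the wired site random-cluster measure ψ^{(1)}_{p,q,Λ}. -/

import Mathlib

open scoped Classical
open Filter MeasureTheory

namespace Paper

abbrev Site (d : ℕ) := Fin d → ℤ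

/-- The `i`-th canonical basis vector in `ℤ^d`. -/
def ee (d : ℕ) (i : Fin d) : Site d := fun j => if j = i then 1 else 0

section General

variable {d : ℕ} {A : Type} [Fintype A] [DecidableEq A]

/-- A configuration `ω` is feasible on a set `Λ` for the constraints `E`. -/
def FeasibleOn (E : Fin d → Set (A × A)) (Λ : Set (Site d)) (ω : Site d → A) : Prop :=
  ∀ x ∈ Λ, ∀ i : Fin d, x + ee d i ∈ Λ → (ω x, ω (x + ee d i)) ∉ E i

/-- The nearest-neighbour SFT `Ω(ℰ)`. -/
def Omega (E : Fin d → Set (A × A)) : Set (Site d → A) := {ω | FeasibleOn E Set.univ ω}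

/-- The energy of a configuration on a finite set `Λ`. -/
noncomputable def energy (Φ₀ : A → ℝ) (Φ₁ : Fin d → A → A → ℝ)
    (Λ : Finset (Site d)) (ω : Site d → A) : ℝ :=
  (∑ x ∈ Λ, Φ₀ (ω x)) +
    ∑ i : Fin d, ∑ x ∈ Λ.filter (fun x => x + ee d i ∈ Λ), Φ₁ i (ω x) (ω (x + ee d i))

/-- Feasibility of a configuration on a finite set, intrinsic version. -/
def FeasibleC (E : Fin d → Set (A × A)) (Λ : Finset (Site d))
    (θ : {x // x ∈ Λ} → A) : Prop :=
  ∀ (x : {x // x ∈ Λ}) (i : Fin d) (h : (x : Site d) + ee d i ∈ Λ),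
    (θ x, θ ⟨(x : Site d) + ee d i, h⟩) ∉ E i

/-- Energy of a configuration on a finite set, intrinsic version. -/
noncomputable def energyC (Φ₀ : A → ℝ) (Φ₁ : Fin d → A → A → ℝ)
    (Λ : Finset (Site d)) (θ : {x // x ∈ Λ} → A) : ℝ :=
  (∑ x : {x // x ∈ Λ}, Φ₀ (θ x)) +
    ∑ i : Fin d, ∑ x : {x // x ∈ Λ},
      if h : (x : Site d) + ee d i ∈ Λ then Φ₁ i (θ x) (θ ⟨(x : Site d) + ee d i, h⟩) else 0

/-- The partition function `Z^Φ_Λ`, summing over feasible (locally admissible) configurations. -/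
noncomputable def Zpart (E : Fin d → Set (A × A)) (Φ₀ : A → ℝ) (Φ₁ : Fin d → A → A → ℝ)
    (Λ : Finset (Site d)) : ℝ :=
  ∑ θ : {x // x ∈ Λ} → A,
    if FeasibleC E Λ θ then Real.exp (-energyC Φ₀ Φ₁ Λ θ) else 0

/-- The closure `Λ ∪ ∂Λ` of a finite set. -/
def closureF (Λ : Finset (Site d)) : Finset (Site d) :=
  Λ ∪ Finset.univ.biUnion fun i : Fin d => Λ.image (· + ee d i) ∪ Λ.image (· - ee d i)

/-- The (outer) boundary `∂Λ`. -/
def bdry (Λ : Finset (Site d)) : Finset (Site d) := closureF Λ \ Λ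

/-- Combine a configuration `θ` on `Λ` with a configuration `ω` off `Λ`. -/
def patch (Λ : Finset (Site d)) (θ : {x // x ∈ Λ} → A) (ω : Site d → A) : Site d → A :=
  fun x => if h : x ∈ Λ then θ ⟨x, h⟩ else ω x

/-- The Gibbsian weight of a configuration `θ` on `Λ` with boundary condition `ω(∂Λ)`. -/
noncomputable def bWeight (E : Fin d → Set (A × A)) (Φ₀ : A → ℝ) (Φ₁ : Fin d → A → A → ℝ)
    (Λ : Finset (Site d)) (ω : Site d → A) (θ : {x // x ∈ Λ} → A) : ℝ :=
  if FeasibleOn E (↑(closureF Λ)) (patch Λ θ ω) then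
    Real.exp (-energy Φ₀ Φ₁ (closureF Λ) (patch Λ θ ω)) else 0

/-- The probability assigned by the specification `π^{ω(∂Λ)}_Λ` to an event `Ev`. -/
noncomputable def piProb (E : Fin d → Set (A × A)) (Φ₀ : A → ℝ) (Φ₁ : Fin d → A → A → ℝ)
    (Λ : Finset (Site d)) (ω : Site d → A) (Ev : (Site d → A) → Prop) : ℝ :=
  (∑ θ : {x // x ∈ Λ} → A, if Ev (patch Λ θ ω) then bWeight E Φ₀ Φ₁ Λ ω θ else 0) /
    ∑ θ : {x // x ∈ Λ} → A, bWeight E Φ₀ Φ₁ Λ ω θ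

/-- Lexicographic (strict) order on `ℤ^d`. -/
def lexLt (x y : Site d) : Prop := ∃ i, (∀ j, j < i → x j = y j) ∧ x i < y i

/-- The block `B_n = [-n,n]^d ∩ ℤ^d`. -/
noncomputable def boxF (d n : ℕ) : Finset (Site d) := Finset.Icc (fun _ => -(n : ℤ)) fun _ => (n : ℤ)

/-- `S_n = B_n \ 𝒫`, where `𝒫` is the lexicographic past. -/
noncomputable def SF (d n : ℕ) : Finset (Site d) := (boxF d n).filter fun x => ¬lexLt x 0

/-- `S_{y,z} = {x ≽ 0 : -y ≤ x ≤ z}`. -/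
noncomputable def SyzF {d : ℕ} (y z : Site d) : Finset (Site d) :=
  (Finset.Icc (-y) z).filter fun x => ¬lexLt x 0

/-- `π_Λ(ω) = π^{ω(∂Λ)}_Λ(θ(0) = ω(0))`. -/
noncomputable def piAt (E : Fin d → Set (A × A)) (Φ₀ : A → ℝ) (Φ₁ : Fin d → A → A → ℝ)
    (Λ : Finset (Site d)) (ω : Site d → A) : ℝ :=
  piProb E Φ₀ Φ₁ Λ ω fun σ => σ 0 = ω 0

/-- `π_n(ω)`. -/
noncomputable def piN (E : Fin d → Set (A × A)) (Φ₀ : A → ℝ) (Φ₁ : Fin d → A → A → ℝ)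
    (n : ℕ) (ω : Site d → A) : ℝ :=
  piAt E Φ₀ Φ₁ (SF d n) ω

/-- `π_{y,z}(ω)`. -/
noncomputable def piYZ (E : Fin d → Set (A × A)) (Φ₀ : A → ℝ) (Φ₁ : Fin d → A → A → ℝ)
    (y z : Site d) (ω : Site d → A) : ℝ :=
  piAt E Φ₀ Φ₁ (SyzF y z) ω

/-- `A_Φ(ω) = -Φ(ω(0)) - Σ_i Φ(ω({0,e_i}))`. -/
noncomputable def AΦ (Φ₀ : A → ℝ) (Φ₁ : Fin d → A → A → ℝ) (ω : Site d → A) : ℝ :=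
  -Φ₀ (ω 0) - ∑ i, Φ₁ i (ω 0) (ω (ee d i))

/-- `θ`, given on the set `Λ`, extends to a point of `Ω(ℰ)` (global admissibility). -/
def extendsOmega (E : Fin d → Set (A × A)) (Λ : Set (Site d)) (θ : Site d → A) : Prop :=
  ∃ ω ∈ Omega E, ∀ x ∈ Λ, ω x = θ x

/-- The square block D-condition. -/
def SquareBlockD (E : Fin d → Set (A × A)) : Prop :=
  ∃ r : ℕ → ℕ, Tendsto (fun n => (r n : ℝ) / (n : ℝ)) atTop (nhds 0) ∧
    ∀ (n : ℕ) (Λ : Finset (Site d)), (∀ x ∈ Λ, x ∉ boxF d (n + r n)) →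
      ∀ θ τ : Site d → A, extendsOmega E ↑(boxF d n) θ → extendsOmega E ↑Λ τ →
        ∃ ω ∈ Omega E, (∀ x ∈ boxF d n, ω x = θ x) ∧ ∀ x ∈ Λ, ω x = τ x

/-- `c_π(ν) = inf {π_Λ(ω) : 0 ∈ Λ finite, ω ∈ supp(ν)}` (with `S = supp(ν)`). -/
noncomputable def cpi (E : Fin d → Set (A × A)) (Φ₀ : A → ℝ) (Φ₁ : Fin d → A → A → ℝ)
    (S : Set (Site d → A)) : ℝ :=
  sInf {r | ∃ Λ : Finset (Site d), (0 : Site d) ∈ Λ ∧ ∃ ω ∈ S, r = piAt E Φ₀ Φ₁ Λ ω}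

/-- The shift action. -/
def shift (t : Site d) (ω : Site d → A) : Site d → A := fun x => ω (x + t)

/-- The cylinder set of configurations agreeing with `θ` on `Λ`. -/
def cylinder (Λ : Finset (Site d)) (θ : Site d → A) : Set (Site d → A) :=
  {σ | ∀ x ∈ Λ, σ x = θ x}

/-- The support of a measure, following the paper's definition. -/
def measSupport [MeasurableSpace A] (ν : Measure (Site d → A)) : Set (Site d → A) :=
  {ω | ∀ Λ : Finset (Site d), 0 < ν (cylinder Λ ω)}

/-- Shift-invariance (stationarity) of a measure. -/
def ShiftInvariant [MeasurableSpace A] (ν : Measure (Site d → A)) : Prop :=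
  ∀ t : Site d, Measure.map (shift t) ν = ν

/-- `ℓ¹` distance on `ℤ^d`. -/
noncomputable def dist1 (x y : Site d) : ℝ := ∑ i, ((x i - y i).natAbs : ℝ)

/-- `ℓ¹` distance between two finite sets. -/
noncomputable def setDist (Θ Sg : Finset (Site d)) : ℝ :=
  sInf {r | ∃ x ∈ Θ, ∃ y ∈ Sg, r = dist1 x y}

/-- Nearest-neighbour adjacency on `ℤ^d`. -/
def adj (x y : Site d) : Prop := (∑ i, (x i - y i).natAbs) = 1

/-- `⋆`-adjacency on `ℤ^d` (`0 < ‖x-y‖_∞ ≤ 1`). -/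
def starAdj (x y : Site d) : Prop := x ≠ y ∧ ∀ i, (x i - y i).natAbs ≤ 1

/-- Connectedness of a subset of `ℤ^d` with respect to adjacency. -/
def ConnectedSet (S : Set (Site d)) : Prop :=
  ∀ x ∈ S, ∀ y ∈ S, Relation.ReflTransGen (fun u v => u ∈ S ∧ v ∈ S ∧ adj u v) x y

/-- Connectedness with respect to `⋆`-adjacency. -/
def StarConnectedSet (S : Set (Site d)) : Prop :=
  ∀ x ∈ S, ∀ y ∈ S, Relation.ReflTransGen (fun u v => u ∈ S ∧ v ∈ S ∧ starAdj u v) x y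

/-- `⋆`-closure of a finite set. -/
noncomputable def starClosureF (Θ : Finset (Site d)) : Finset (Site d) :=
  Θ ∪ Θ.biUnion fun x => ((Finset.Icc (fun _ => (-1 : ℤ)) fun _ => (1 : ℤ)).erase 0).image (x + ·)

/-- `⋆`-boundary of a finite set. -/
noncomputable def starBdryF (Θ : Finset (Site d)) : Finset (Site d) := starClosureF Θ \ Θ

/-- Inner boundary of a finite set. -/
noncomputable def innerBdry (Λ : Finset (Site d)) : Finset (Site d) :=
  Λ.filter fun x => ∃ y, adj x y ∧ y ∉ Λ

end General

section Percolation

/-- The open cluster of `x` in a site configuration `σ` on `ℤ^d`. -/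
def openCluster {d : ℕ} (σ : Site d → Bool) (x : Site d) : Set (Site d) :=
  {y | Relation.ReflTransGen (fun u v => adj u v ∧ σ u = true ∧ σ v = true) x y}

/-- There is an infinite connected component of `1`'s. -/
def HasInfiniteCluster {d : ℕ} (σ : Site d → Bool) : Prop :=
  ∃ x, σ x = true ∧ (openCluster σ x).Infinite

/-- `μ` is the i.i.d. Bernoulli(`p`) site percolation measure on `{0,1}^{ℤ^d}`. -/
def IsBernoulliProduct {d : ℕ} (p : ℝ) (μ : Measure (Site d → Bool)) : Prop :=
  IsProbabilityMeasure μ ∧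
    ∀ (Λ : Finset (Site d)) (η : Site d → Bool),
      (μ (cylinder Λ η)).toReal = ∏ x ∈ Λ, if η x then p else 1 - p

/-- The critical probability of Bernoulli site percolation on `ℤ²`. -/
noncomputable def pc : ℝ :=
  sSup {p : ℝ | 0 ≤ p ∧ p ≤ 1 ∧
    ∀ μ : Measure (Site 2 → Bool), IsBernoulliProduct p μ →
      μ {σ | HasInfiniteCluster σ} = 0}

end Percolation

section SiteRC

variable {d : ℕ}

/-- The cluster of `x` among the `1`'s of `η` inside `Λ`. -/
def clusterIn (Λ : Finset (Site d)) (η : Site d → Bool) (x : Site d) : Set (Site d) :=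
  {y | Relation.ReflTransGen
    (fun u v => u ∈ Λ ∧ v ∈ Λ ∧ η u = true ∧ η v = true ∧ adj u v) x y}

/-- `κ_Λ(η)`: number of connected components of `1`'s of `η` in `Λ` not meeting the
inner boundary of `Λ`. -/
noncomputable def kappa (Λ : Finset (Site d)) (η : Site d → Bool) : ℕ :=
  Set.ncard {C : Set (Site d) | ∃ x ∈ Λ, η x = true ∧ C = clusterIn Λ η x ∧
    ∀ z ∈ C, z ∉ innerBdry Λ}

/-- The (unnormalized) wired site random-cluster weight. -/
noncomputable def psiWeight (p q : ℝ) (Λ : Finset (Site d)) (η : Site d → Bool) : ℝ :=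
  (p / (1 - p)) ^ (Λ.filter fun x => η x = true).card * q ^ kappa Λ η

/-- Extend a `{0,1}`-configuration on `Λ` by `0` outside. -/
def patchB (Λ : Finset (Site d)) (η : {x // x ∈ Λ} → Bool) : Site d → Bool :=
  fun x => if h : x ∈ Λ then η ⟨x, h⟩ else false

/-- Conditional probability of an event under the wired site random-cluster measure
`ψ^{(1)}_{p,q,Λ}`, given the values `τ` on `Δ`. -/
noncomputable def psiCond (p q : ℝ) (Λ : Finset (Site d))
    (Ev : (Site d → Bool) → Prop) (Δ : Finset (Site d)) (τ : Site d → Bool) : ℝ :=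
  (∑ η : {x // x ∈ Λ} → Bool,
      if Ev (patchB Λ η) ∧ ∀ x ∈ Δ, patchB Λ η x = τ x
      then psiWeight p q Λ (patchB Λ η) else 0) /
    ∑ η : {x // x ∈ Λ} → Bool,
      if ∀ x ∈ Δ, patchB Λ η x = τ x then psiWeight p q Λ (patchB Λ η) else 0

end SiteRC


section Models

/-- Potts constraints: none. -/
def pottsE (q : ℕ) : Fin 2 → Set (Fin q × Fin q) := fun _ => ∅

/-- Potts single-site interaction: zero. -/
def pottsPhi0 (q : ℕ) : Fin q → ℝ := fun _ => 0

/-- Potts bond interaction: `-β` on agreeing endpoints, `0` otherwise. -/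
noncomputable def pottsPhi1 (q : ℕ) (β : ℝ) : Fin 2 → Fin q → Fin q → ℝ :=
  fun _ a b => if a = b then -β else 0

/-- The distinguished Potts colour `q`. -/
def qcol (q : ℕ) (hq : 0 < q) : Fin q := ⟨q - 1, by omega⟩

/-- The monochromatic Potts point `ω_q`. -/
def omegaPotts (q : ℕ) (hq : 0 < q) : Site 2 → Fin q := fun _ => qcol q hq

/-- Widom-Rowlinson constraints: adjacent distinct nonzero symbols are forbidden. -/
def wrE (q : ℕ) : Fin 2 → Set (Fin (q + 1) × Fin (q + 1)) :=
  fun _ => {ab | ab.1 ≠ 0 ∧ ab.2 ≠ 0 ∧ ab.1 ≠ ab.2}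

/-- Widom-Rowlinson single-site interaction: `-log λ` on particles. -/
noncomputable def wrPhi0 (q : ℕ) (lam : ℝ) : Fin (q + 1) → ℝ :=
  fun a => if a = 0 then 0 else -Real.log lam

/-- Widom-Rowlinson bond interaction: zero. -/
def wrPhi1 (q : ℕ) : Fin 2 → Fin (q + 1) → Fin (q + 1) → ℝ := fun _ _ _ => 0

/-- The monochromatic Widom-Rowlinson point `ω_q`. -/
def omegaWR (q : ℕ) : Site 2 → Fin (q + 1) := fun _ => Fin.last q

/-- Hard-core constraints: adjacent `1`'s are forbidden. -/
def hcE : Fin 2 → Set (Bool × Bool) := fun _ => {(true, true)}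

/-- Hard-core single-site interaction: `-log γ` on particles. -/
noncomputable def hcPhi0 (γ : ℝ) : Bool → ℝ := fun b => if b then -Real.log γ else 0

/-- Hard-core bond interaction: zero. -/
def hcPhi1 : Fin 2 → Bool → Bool → ℝ := fun _ _ _ => 0

/-- The odd checkerboard point `ω^{(o)}`. -/
def omegaOdd : Site 2 → Bool := fun x => decide (Odd (x 0 + x 1))

end Models


section WRtoRC

open Finset

/-! ### Auxiliary lemmas for Proposition 5.4 -/

lemma adj_add_ee' (x : Site 2) (i : Fin 2) : adj x (x + ee 2 i) := by
  unfold adj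
  rw [Fin.sum_univ_two]
  fin_cases i <;> simp [ee, Pi.add_apply] <;> omega

lemma adj_symm' {x y : Site 2} (h : adj x y) : adj y x := by
  unfold adj at h ⊢
  rw [Fin.sum_univ_two] at h ⊢
  omega

lemma adj_cases' {x y : Site 2} (h : adj x y) :
    (∃ i, y = x + ee 2 i) ∨ (∃ i, x = y + ee 2 i) := by
  unfold adj at h
  rw [Fin.sum_univ_two] at h
  have h4 : (x 0 = y 0 + 1 ∧ x 1 = y 1) ∨ (y 0 = x 0 + 1 ∧ x 1 = y 1) ∨
      (x 0 = y 0 ∧ x 1 = y 1 + 1) ∨ (x 0 = y 0 ∧ y 1 = x 1 + 1) := by omega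
  rcases h4 with ⟨h0, h1⟩ | ⟨h0, h1⟩ | ⟨h0, h1⟩ | ⟨h0, h1⟩
  · exact Or.inr ⟨0, funext fun j => by fin_cases j <;> simp [ee, Pi.add_apply] <;> omega⟩
  · exact Or.inl ⟨0, funext fun j => by fin_cases j <;> simp [ee, Pi.add_apply] <;> omega⟩
  · exact Or.inr ⟨1, funext fun j => by fin_cases j <;> simp [ee, Pi.add_apply] <;> omega⟩
  · exact Or.inl ⟨1, funext fun j => by fin_cases j <;> simp [ee, Pi.add_apply] <;> omega⟩

lemma subset_closureF' {d : ℕ} (Λ : Finset (Site d)) : Λ ⊆ closureF Λ :=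
  Finset.subset_union_left

lemma add_mem_closureF' {d : ℕ} {Λ : Finset (Site d)} {x : Site d} (hx : x ∈ Λ) (i : Fin d) :
    x + ee d i ∈ closureF Λ := by
  refine Finset.mem_union_right _ (Finset.mem_biUnion.mpr ⟨i, Finset.mem_univ _, ?_⟩)
  exact Finset.mem_union_left _ (Finset.mem_image_of_mem _ hx)

lemma mem_closureF_of_add' {d : ℕ} {Λ : Finset (Site d)} {x : Site d} {i : Fin d}
    (h : x + ee d i ∈ Λ) : x ∈ closureF Λ := by
  refine Finset.mem_union_right _ (Finset.mem_biUnion.mpr ⟨i, Finset.mem_univ _, ?_⟩)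
  refine Finset.mem_union_right _ (Finset.mem_image.mpr ⟨x + ee d i, h, ?_⟩)
  simp

lemma patch_mem' {d : ℕ} {A : Type} {Λ : Finset (Site d)} {θ : {z // z ∈ Λ} → A}
    {ω : Site d → A} {x : Site d} (h : x ∈ Λ) : patch Λ θ ω x = θ ⟨x, h⟩ := dif_pos h

lemma patch_coe' {d : ℕ} {A : Type} {Λ : Finset (Site d)} {θ : {z // z ∈ Λ} → A}
    {ω : Site d → A} (x : {z // z ∈ Λ}) : patch Λ θ ω ↑x = θ x := by
  rw [patch_mem' x.2]

lemma patch_not_mem' {d : ℕ} {A : Type} {Λ : Finset (Site d)} {θ : {z // z ∈ Λ} → A}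
    {ω : Site d → A} {x : Site d} (h : x ∉ Λ) : patch Λ θ ω x = ω x := dif_neg h

lemma patchB_mem' {d : ℕ} {Λ : Finset (Site d)} {η : {z // z ∈ Λ} → Bool} {x : Site d}
    (h : x ∈ Λ) : patchB Λ η x = η ⟨x, h⟩ := dif_pos h

lemma last_ne_zero' {q : ℕ} (hq : 0 < q) : (Fin.last q : Fin (q + 1)) ≠ 0 := by
  intro h
  have := congrArg Fin.val h
  simp [Fin.last] at this
  omega

lemma not_mem_wrE' {q : ℕ} {i : Fin 2} {a b : Fin (q + 1)} :
    (a, b) ∉ wrE q i ↔ (a ≠ 0 → b ≠ 0 → a = b) := by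
  simp only [wrE, Set.mem_setOf_eq]
  tauto

/-- Characterisation of feasibility for WR configurations with all-`q` boundary. -/
lemma wr_feas_iff {q : ℕ} (hq : 0 < q) (Λ : Finset (Site 2)) (θ : {z // z ∈ Λ} → Fin (q + 1)) :
    FeasibleOn (wrE q) (↑(closureF Λ)) (patch Λ θ (omegaWR q)) ↔
      ((∀ x y : {z // z ∈ Λ}, adj (↑x : Site 2) ↑y → θ x ≠ 0 → θ y ≠ 0 → θ x = θ y) ∧
       ∀ x : {z // z ∈ Λ}, (↑x : Site 2) ∈ innerBdry Λ → θ x ≠ 0 → θ x = Fin.last q) := by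
  constructor
  · intro hF
    constructor
    · intro x y hadj hx0 hy0
      rcases adj_cases' hadj with ⟨i, hy⟩ | ⟨i, hx⟩
      · have h := hF ↑x (subset_closureF' _ x.2) i (by rw [← hy]; exact subset_closureF' _ y.2)
        rw [not_mem_wrE'] at h
        rw [← hy, patch_coe', patch_coe'] at h
        exact h hx0 hy0
      · have h := hF (↑y : Site 2) (subset_closureF' _ y.2) i (by rw [← hx]; exact subset_closureF' _ x.2)
        rw [not_mem_wrE'] at h
        rw [← hx, patch_coe', patch_coe'] at h
        exact (h hy0 hx0).symm
    · intro x hxb hx0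
      obtain ⟨-, y, hady, hyΛ⟩ := Finset.mem_filter.mp hxb
      rcases adj_cases' hady with ⟨i, hy⟩ | ⟨i, hx⟩
      · have h := hF ↑x (subset_closureF' _ x.2) i (add_mem_closureF' x.2 i)
        rw [not_mem_wrE'] at h
        rw [patch_coe', ← hy, patch_not_mem' hyΛ] at h
        exact h hx0 (last_ne_zero' hq)
      · have h := hF y (mem_closureF_of_add' (i := i) (by rw [← hx]; exact x.2)) i
          (by rw [← hx]; exact subset_closureF' _ x.2)
        rw [not_mem_wrE'] at h
        rw [← hx, patch_coe', patch_not_mem' hyΛ] at h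
        exact (h (last_ne_zero' hq) hx0).symm
  · rintro ⟨h1, h2⟩ x hx i hxi
    rw [not_mem_wrE']
    by_cases hxΛ : x ∈ Λ <;> by_cases hyΛ : x + ee 2 i ∈ Λ
    · rw [patch_mem' hxΛ, patch_mem' hyΛ]
      exact h1 ⟨x, hxΛ⟩ ⟨x + ee 2 i, hyΛ⟩ (adj_add_ee' x i)
    · rw [patch_mem' hxΛ, patch_not_mem' hyΛ]
      intro ha _
      exact h2 ⟨x, hxΛ⟩
        (Finset.mem_filter.mpr ⟨hxΛ, ⟨x + ee 2 i, adj_add_ee' x i, hyΛ⟩⟩) ha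
    · rw [patch_not_mem' hxΛ, patch_mem' hyΛ]
      intro _ hb
      exact (h2 ⟨x + ee 2 i, hyΛ⟩
        (Finset.mem_filter.mpr ⟨hyΛ, ⟨x, adj_symm' (adj_add_ee' x i), hxΛ⟩⟩) hb).symm
    · rw [patch_not_mem' hxΛ, patch_not_mem' hyΛ]
      intro _ _
      rfl


lemma bdry_eq' {d : ℕ} (Λ : Finset (Site d)) : closureF Λ = Λ ∪ bdry Λ :=
  (Finset.union_sdiff_of_subset (subset_closureF' Λ)).symm

/-- Energy of a WR configuration with all-`q` boundary. -/
lemma wr_energy {q : ℕ} (hq : 0 < q) (lam : ℝ) (Λ : Finset (Site 2))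
    (θ : {z // z ∈ Λ} → Fin (q + 1)) :
    energy (wrPhi0 q lam) (wrPhi1 q) (closureF Λ) (patch Λ θ (omegaWR q)) =
      -((((bdry Λ).card +
          (Finset.univ.filter fun x : {z // z ∈ Λ} => θ x ≠ 0).card : ℕ) : ℝ) *
        Real.log lam) := by
  unfold energy
  have h2 : ∑ i : Fin 2, ∑ x ∈ (closureF Λ).filter (fun x => x + ee 2 i ∈ closureF Λ),
      wrPhi1 q i (patch Λ θ (omegaWR q) x) (patch Λ θ (omegaWR q) (x + ee 2 i)) = 0 := by
    simp [wrPhi1]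
  rw [h2, add_zero]
  have hdisj : Disjoint Λ (bdry Λ) := Finset.disjoint_sdiff
  rw [bdry_eq' Λ, Finset.sum_union hdisj]
  have hΛ : ∑ x ∈ Λ, wrPhi0 q lam (patch Λ θ (omegaWR q) x) =
      ((Finset.univ.filter fun x : {z // z ∈ Λ} => θ x ≠ 0).card : ℝ) * (-Real.log lam) := by
    rw [← Finset.sum_coe_sort Λ (fun x => wrPhi0 q lam (patch Λ θ (omegaWR q) x))]
    have hterm : ∀ x : {z // z ∈ Λ}, wrPhi0 q lam (patch Λ θ (omegaWR q) ↑x) =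
        if θ x ≠ 0 then -Real.log lam else 0 := by
      intro x
      rw [patch_coe']
      by_cases h : θ x = 0 <;> simp [wrPhi0, h]
    rw [Finset.sum_congr rfl fun x _ => hterm x, ← Finset.sum_filter, Finset.sum_const,
      nsmul_eq_mul]
  have hB : ∑ x ∈ bdry Λ, wrPhi0 q lam (patch Λ θ (omegaWR q) x) =
      ((bdry Λ).card : ℝ) * (-Real.log lam) := by
    rw [Finset.sum_congr rfl fun x hx => ?_, Finset.sum_const, nsmul_eq_mul]
    rw [patch_not_mem' (Finset.mem_sdiff.mp hx).2]
    show wrPhi0 q lam (Fin.last q) = _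
    simp [wrPhi0, last_ne_zero' hq]
  rw [hΛ, hB]
  push_cast
  ring

/-- The WR Gibbs weight with all-`q` boundary. -/
lemma wr_bWeight {q : ℕ} (hq : 0 < q) {lam : ℝ} (hlam : 0 < lam) (Λ : Finset (Site 2))
    (θ : {z // z ∈ Λ} → Fin (q + 1)) :
    bWeight (wrE q) (wrPhi0 q lam) (wrPhi1 q) Λ (omegaWR q) θ =
      if FeasibleOn (wrE q) (↑(closureF Λ)) (patch Λ θ (omegaWR q)) then
        lam ^ ((bdry Λ).card +
          (Finset.univ.filter fun x : {z // z ∈ Λ} => θ x ≠ 0).card) else 0 := by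
  unfold bWeight
  split
  · rw [wr_energy hq lam Λ θ, neg_neg, ← Real.log_pow, Real.exp_log (by positivity)]
  · rfl

lemma mem_clusterIn_self' {Λ : Finset (Site 2)} {σ : Site 2 → Bool} (x : Site 2) :
    x ∈ clusterIn Λ σ x := Relation.ReflTransGen.refl

lemma clusterIn_eq_of_mem' {Λ : Finset (Site 2)} {σ : Site 2 → Bool} {x y : Site 2}
    (h : y ∈ clusterIn Λ σ x) : clusterIn Λ σ y = clusterIn Λ σ x := by
  have hsymm : Symmetric fun u v : Site 2 =>
      u ∈ Λ ∧ v ∈ Λ ∧ σ u = true ∧ σ v = true ∧ adj u v :=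
    fun u v ⟨a, b, c, d, e⟩ => ⟨b, a, d, c, adj_symm' e⟩
  ext z
  constructor
  · intro hz
    exact Relation.ReflTransGen.trans h hz
  · intro hz
    exact Relation.ReflTransGen.trans ((@Relation.ReflTransGen.stdSymm _ _ ⟨fun a b hab => hsymm hab⟩).symm _ _ h) hz

lemma mem_of_mem_clusterIn' {Λ : Finset (Site 2)} {σ : Site 2 → Bool} {x z : Site 2}
    (hx : x ∈ Λ) (hσ : σ x = true) (h : z ∈ clusterIn Λ σ x) : z ∈ Λ ∧ σ z = true := by
  induction h with
  | refl => exact ⟨hx, hσ⟩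
  | tail _ hR _ => exact ⟨hR.2.1, hR.2.2.2.1⟩

/-- Constancy of a feasible colouring along clusters. -/
lemma wr_theta_const {q : ℕ} {Λ : Finset (Site 2)} {η : {z // z ∈ Λ} → Bool}
    {θ : {z // z ∈ Λ} → Fin (q + 1)}
    (hpat : ∀ x, η x = true ↔ θ x ≠ 0)
    (h1 : ∀ x y : {z // z ∈ Λ}, adj (↑x : Site 2) ↑y → θ x ≠ 0 → θ y ≠ 0 → θ x = θ y)
    {u v : Site 2} (h : v ∈ clusterIn Λ (patchB Λ η) u) :
    ∀ (hu : u ∈ Λ) (hv : v ∈ Λ), θ ⟨u, hu⟩ = θ ⟨v, hv⟩ := by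
  induction h with
  | refl => intro hu hv; rfl
  | @tail b c hab hbc ih =>
    intro hu hv
    have hb : b ∈ Λ := hbc.1
    have hbσ : θ ⟨b, hb⟩ ≠ 0 := (hpat _).mp ((patchB_mem' hb).symm.trans hbc.2.2.1)
    have hcσ : θ ⟨c, hv⟩ ≠ 0 := (hpat _).mp ((patchB_mem' hv).symm.trans hbc.2.2.2.1)
    exact (ih hu hb).trans (h1 ⟨b, hb⟩ ⟨c, hv⟩ hbc.2.2.2.2 hbσ hcσ)

/-- Counting feasible WR colourings with a given occupation pattern. -/
lemma wr_count_feas {q : ℕ} (hq : 0 < q) (Λ : Finset (Site 2)) (η : {x // x ∈ Λ} → Bool) :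
    ((Finset.univ : Finset ({x // x ∈ Λ} → Fin (q + 1))).filter
      (fun θ => (∀ x, η x = true ↔ θ x ≠ 0) ∧
        FeasibleOn (wrE q) (↑(closureF Λ)) (patch Λ θ (omegaWR q)))).card
    = q ^ kappa Λ (patchB Λ η) := by
  classical
  set σ : Site 2 → Bool := patchB Λ η with hσdef
  set FC : Set (Set (Site 2)) :=
    {C | ∃ x ∈ Λ, σ x = true ∧ C = clusterIn Λ σ x ∧ ∀ z ∈ C, z ∉ innerBdry Λ} with hFCdef
  have hkappa : kappa Λ σ = FC.ncard := rfl
  have hFCfin : FC.Finite := by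
    refine Set.Finite.subset ((Λ.finite_toSet).image (clusterIn Λ σ)) ?_
    rintro C ⟨x, hx, -, rfl, -⟩
    exact ⟨x, hx, rfl⟩
  haveI : Fintype ↥FC := hFCfin.fintype
  -- choice of representatives
  have repspec : ∀ C : ↥FC, ∃ x, x ∈ Λ ∧ σ x = true ∧ (C : Set (Site 2)) = clusterIn Λ σ x := by
    rintro ⟨C, x, hx, hσx, rfl, -⟩
    exact ⟨x, hx, hσx, rfl⟩
  choose rep repΛ repσ repC using repspec
  have hne : ∀ (θ : {x // x ∈ Λ} → Fin (q + 1)), (∀ x, η x = true ↔ θ x ≠ 0) →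
      ∀ C : ↥FC, θ ⟨rep C, repΛ C⟩ ≠ 0 :=
    fun θ hpat C => (hpat _).mp ((patchB_mem' (repΛ C)).symm.trans (repσ C))
  -- if the cluster of x is not free, a feasible colouring is forced to be `q` there
  have hforced : ∀ (θ : {x // x ∈ Λ} → Fin (q + 1)), (∀ x, η x = true ↔ θ x ≠ 0) →
      (∀ x y : {z // z ∈ Λ}, adj (↑x : Site 2) ↑y → θ x ≠ 0 → θ y ≠ 0 → θ x = θ y) →
      (∀ x : {z // z ∈ Λ}, (↑x : Site 2) ∈ innerBdry Λ → θ x ≠ 0 → θ x = Fin.last q) →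
      ∀ x : {z // z ∈ Λ}, η x = true → clusterIn Λ σ ↑x ∉ FC → θ x = Fin.last q := by
    intro θ hpat h1 h2 x hηx hnC
    have hσx : σ ↑x = true := (patchB_mem' x.2).trans hηx
    have hz : ∃ z ∈ clusterIn Λ σ ↑x, z ∈ innerBdry Λ := by
      by_contra hcon
      push_neg at hcon
      exact hnC ⟨↑x, x.2, hσx, rfl, hcon⟩
    obtain ⟨z, hzC, hzB⟩ := hz
    obtain ⟨hzΛ, hzσ⟩ := mem_of_mem_clusterIn' x.2 hσx hzC
    have hzne : θ ⟨z, hzΛ⟩ ≠ 0 := (hpat _).mp ((patchB_mem' hzΛ).symm.trans hzσ)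
    have := wr_theta_const hpat h1 hzC x.2 hzΛ
    rw [this]
    exact h2 ⟨z, hzΛ⟩ hzB hzne
  rw [hkappa]
  have htarget : (Finset.univ :
      Finset (↥FC → {c : Fin (q + 1) // c ≠ 0})).card = q ^ FC.ncard := by
    rw [Finset.card_univ, Fintype.card_fun]
    congr 1
    · rw [Fintype.card_subtype_compl, Fintype.card_fin, Fintype.card_subtype_eq]
      omega
    · rw [Set.ncard_eq_toFinset_card', Set.toFinset_card]
  rw [← htarget]
  refine Finset.card_bij
    (fun θ hθ => fun C => (⟨θ ⟨rep C, repΛ C⟩,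
      hne θ (Finset.mem_filter.mp hθ).2.1 C⟩ : {c : Fin (q + 1) // c ≠ 0}))
    (fun θ hθ => Finset.mem_univ _) ?_ ?_
  · -- injectivity
    intro θ1 hθ1 θ2 hθ2 h
    obtain ⟨hpat1, hfeas1⟩ := (Finset.mem_filter.mp hθ1).2
    obtain ⟨h11, h12⟩ := (wr_feas_iff hq Λ θ1).mp hfeas1
    obtain ⟨hpat2, hfeas2⟩ := (Finset.mem_filter.mp hθ2).2
    obtain ⟨h21, h22⟩ := (wr_feas_iff hq Λ θ2).mp hfeas2
    funext x
    by_cases hηx : η x = true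
    · have hσx : σ ↑x = true := (patchB_mem' x.2).trans hηx
      by_cases hC : clusterIn Λ σ ↑x ∈ FC
      · set C : ↥FC := ⟨clusterIn Λ σ ↑x, hC⟩ with hCdef
        have hrepmem : rep C ∈ clusterIn Λ σ ↑x := by
          have h2' : (C : Set (Site 2)) = clusterIn Λ σ (rep C) := repC C
          have h1' : rep C ∈ (C : Set (Site 2)) := by
            rw [h2']
            exact mem_clusterIn_self' _
          exact h1'
        have e1 : θ1 x = θ1 ⟨rep C, repΛ C⟩ := wr_theta_const hpat1 h11 hrepmem x.2 (repΛ C)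
        have e2 : θ2 x = θ2 ⟨rep C, repΛ C⟩ := wr_theta_const hpat2 h21 hrepmem x.2 (repΛ C)
        have := congrFun h C
        rw [Subtype.ext_iff] at this
        rw [e1, e2]
        exact this
      · rw [hforced θ1 hpat1 h11 h12 x hηx hC, hforced θ2 hpat2 h21 h22 x hηx hC]
    · have e1 : θ1 x = 0 := by
        by_contra hcon
        exact hηx ((hpat1 x).mpr hcon)
      have e2 : θ2 x = 0 := by
        by_contra hcon
        exact hηx ((hpat2 x).mpr hcon)
      rw [e1, e2]
  · -- surjectivity
    intro fm _
    set θ : {x // x ∈ Λ} → Fin (q + 1) := fun x =>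
      if η x = true then
        (if hC : clusterIn Λ σ ↑x ∈ FC then (fm ⟨_, hC⟩ : {c : Fin (q + 1) // c ≠ 0}).1
         else Fin.last q)
      else 0 with hθdef
    have hpat : ∀ x, η x = true ↔ θ x ≠ 0 := by
      intro x
      by_cases hηx : η x = true
      · simp only [hθdef, if_pos hηx]
        refine iff_of_true hηx ?_
        by_cases hC : clusterIn Λ σ ↑x ∈ FC
        · rw [dif_pos hC]; exact (fm ⟨_, hC⟩).2
        · rw [dif_neg hC]; exact last_ne_zero' hq
      · simp only [hθdef, if_neg hηx]
        simp [hηx]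
    have hfeas : FeasibleOn (wrE q) (↑(closureF Λ)) (patch Λ θ (omegaWR q)) := by
      rw [wr_feas_iff hq]
      constructor
      · intro x y hadj hx0 hy0
        have hηx : η x = true := (hpat x).mpr hx0
        have hηy : η y = true := (hpat y).mpr hy0
        have hσx : σ ↑x = true := (patchB_mem' x.2).trans hηx
        have hσy : σ ↑y = true := (patchB_mem' y.2).trans hηy
        have hcl : clusterIn Λ σ (↑y : Site 2) = clusterIn Λ σ ↑x :=
          clusterIn_eq_of_mem' (Relation.ReflTransGen.single ⟨x.2, y.2, hσx, hσy, hadj⟩)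
        simp only [hθdef, if_pos hηx, if_pos hηy]
        rw [hcl]
      · intro x hxB hx0
        have hηx : η x = true := (hpat x).mpr hx0
        have hC : clusterIn Λ σ ↑x ∉ FC := by
          rintro ⟨x', hx', hσx', hCeq, hfree⟩
          exact hfree ↑x (mem_clusterIn_self' _) hxB
        simp only [hθdef, if_pos hηx, dif_neg hC]
    refine ⟨θ, Finset.mem_filter.mpr ⟨Finset.mem_univ _, hpat, hfeas⟩, ?_⟩
    funext C
    have hηr : η ⟨rep C, repΛ C⟩ = true := (patchB_mem' (repΛ C)).symm.trans (repσ C)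
    have hCeq : clusterIn Λ σ (rep C) = (C : Set (Site 2)) := (repC C).symm
    have hC' : clusterIn Λ σ (rep C) ∈ FC := by rw [hCeq]; exact C.2
    rw [Subtype.ext_iff]
    show θ ⟨rep C, repΛ C⟩ = (fm C).1
    simp only [hθdef, if_pos hηr, dif_pos hC']
    have : (⟨clusterIn Λ σ (rep C), hC'⟩ : ↥FC) = C := Subtype.ext hCeq
    rw [this]

lemma wr_n1_card {Λ : Finset (Site 2)} (η : {x // x ∈ Λ} → Bool) :
    (Λ.filter fun x => patchB Λ η x = true).card =
      (Finset.univ.filter fun x : {z // z ∈ Λ} => η x = true).card := by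
  refine Finset.card_bij (fun x hx => ⟨x, (Finset.mem_filter.mp hx).1⟩) ?_ ?_ ?_
  · intro x hx
    refine Finset.mem_filter.mpr ⟨Finset.mem_univ _, ?_⟩
    have h := (Finset.mem_filter.mp hx).2
    rwa [patchB_mem' (Finset.mem_filter.mp hx).1] at h
  · intro x hx y hy hxy
    exact congrArg Subtype.val hxy
  · intro b hb
    refine ⟨↑b, Finset.mem_filter.mpr ⟨b.2, ?_⟩, rfl⟩
    rw [patchB_mem' b.2]
    exact (Finset.mem_filter.mp hb).2

lemma wr_sum_pattern {q : ℕ} (hq : 0 < q) {lam : ℝ} (hlam : 0 < lam) (Λ : Finset (Site 2))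
    (η : {x // x ∈ Λ} → Bool) :
    (∑ θ : {x // x ∈ Λ} → Fin (q + 1),
        if ∀ x : {x // x ∈ Λ}, η x = true ↔ θ x ≠ 0
        then bWeight (wrE q) (wrPhi0 q lam) (wrPhi1 q) Λ (omegaWR q) θ else 0) =
      lam ^ (bdry Λ).card *
        (lam ^ (Finset.univ.filter fun x : {z // z ∈ Λ} => η x = true).card *
          (q : ℝ) ^ kappa Λ (patchB Λ η)) := by
  have hterm : ∀ θ : {x // x ∈ Λ} → Fin (q + 1),
      (if ∀ x : {x // x ∈ Λ}, η x = true ↔ θ x ≠ 0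
       then bWeight (wrE q) (wrPhi0 q lam) (wrPhi1 q) Λ (omegaWR q) θ else 0) =
      if (∀ x, η x = true ↔ θ x ≠ 0) ∧
          FeasibleOn (wrE q) (↑(closureF Λ)) (patch Λ θ (omegaWR q))
        then lam ^ ((bdry Λ).card +
          (Finset.univ.filter fun x : {z // z ∈ Λ} => η x = true).card) else 0 := by
    intro θ
    by_cases hpat : ∀ x : {x // x ∈ Λ}, η x = true ↔ θ x ≠ 0
    · rw [if_pos hpat, wr_bWeight hq hlam Λ θ]
      have hcard : (Finset.univ.filter fun x : {z // z ∈ Λ} => θ x ≠ 0).card =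
          (Finset.univ.filter fun x : {z // z ∈ Λ} => η x = true).card := by
        congr 1
        exact Finset.filter_congr fun x _ => (hpat x).symm
      rw [hcard]
      by_cases hf : FeasibleOn (wrE q) (↑(closureF Λ)) (patch Λ θ (omegaWR q))
      · rw [if_pos hf, if_pos ⟨hpat, hf⟩]
      · rw [if_neg hf, if_neg fun hc => hf hc.2]
    · rw [if_neg hpat, if_neg fun hc => hpat hc.1]
  rw [Finset.sum_congr rfl fun θ _ => hterm θ, ← Finset.sum_filter, Finset.sum_const,
    nsmul_eq_mul, wr_count_feas hq Λ η]
  push_cast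
  rw [pow_add]
  ring

lemma wr_psiWeight {q : ℕ} {lam : ℝ} (hlam : 0 < lam) (Λ : Finset (Site 2))
    (η : {x // x ∈ Λ} → Bool) :
    psiWeight (lam / (1 + lam)) (q : ℝ) Λ (patchB Λ η) =
      lam ^ (Finset.univ.filter fun x : {z // z ∈ Λ} => η x = true).card *
        (q : ℝ) ^ kappa Λ (patchB Λ η) := by
  unfold psiWeight
  have h1 : (1 : ℝ) + lam ≠ 0 := by positivity
  have e1 : 1 - lam / (1 + lam) = 1 / (1 + lam) := by
    field_simp
    ring
  have hpp : lam / (1 + lam) / (1 - lam / (1 + lam)) = lam := by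
    rw [e1]
    field_simp
  rw [hpp, wr_n1_card η]

lemma wr_denom_split {q : ℕ} (lam : ℝ) (Λ : Finset (Site 2)) :
    (∑ θ : {x // x ∈ Λ} → Fin (q + 1),
        bWeight (wrE q) (wrPhi0 q lam) (wrPhi1 q) Λ (omegaWR q) θ) =
      ∑ η' : {x // x ∈ Λ} → Bool,
        ∑ θ : {x // x ∈ Λ} → Fin (q + 1),
          if ∀ x : {x // x ∈ Λ}, η' x = true ↔ θ x ≠ 0
          then bWeight (wrE q) (wrPhi0 q lam) (wrPhi1 q) Λ (omegaWR q) θ else 0 := by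
  classical
  set G : ({x // x ∈ Λ} → Fin (q + 1)) → ({x // x ∈ Λ} → Bool) :=
    fun θ x => decide (θ x ≠ 0) with hG
  have hfib := Finset.sum_fiberwise_eq_sum_filter Finset.univ Finset.univ G
    (fun θ => bWeight (wrE q) (wrPhi0 q lam) (wrPhi1 q) Λ (omegaWR q) θ)
  have hr : (Finset.univ.filter fun θ : {x // x ∈ Λ} → Fin (q + 1) =>
      G θ ∈ Finset.univ) = Finset.univ := by
    simp
  rw [hr] at hfib
  rw [← hfib]
  refine Finset.sum_congr rfl fun η' _ => ?_
  rw [Finset.sum_filter]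
  refine Finset.sum_congr rfl fun θ _ => ?_
  refine if_congr ?_ rfl rfl
  rw [hG, funext_iff]
  refine forall_congr' fun x => ?_
  cases hx : η' x <;> simp [hx]
end WRtoRC

/-- Proposition 5.4: the push-forward of the Widom-Rowlinson
distribution with monochromatic boundary under the occupation map `f` is the wired site
random-cluster measure with `p = λ/(1+λ)`. -/
theorem wr_pushforward_site_rc (q : ℕ) (hq : 0 < q) (lam : ℝ) (hlam : 0 < lam)
    (Λ : Finset (Site 2)) :
    ∀ η : {x // x ∈ Λ} → Bool,
      (∑ θ : {x // x ∈ Λ} → Fin (q + 1),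
          if ∀ x : {x // x ∈ Λ}, η x = true ↔ θ x ≠ 0
          then bWeight (wrE q) (wrPhi0 q lam) (wrPhi1 q) Λ (omegaWR q) θ else 0) /
        (∑ θ : {x // x ∈ Λ} → Fin (q + 1),
          bWeight (wrE q) (wrPhi0 q lam) (wrPhi1 q) Λ (omegaWR q) θ) =
      psiWeight (lam / (1 + lam)) (q : ℝ) Λ (patchB Λ η) /
        ∑ η' : {x // x ∈ Λ} → Bool, psiWeight (lam / (1 + lam)) (q : ℝ) Λ (patchB Λ η') := by
  intro η
  have key : ∀ η' : {x // x ∈ Λ} → Bool,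
      (∑ θ : {x // x ∈ Λ} → Fin (q + 1),
          if ∀ x : {x // x ∈ Λ}, η' x = true ↔ θ x ≠ 0
          then bWeight (wrE q) (wrPhi0 q lam) (wrPhi1 q) Λ (omegaWR q) θ else 0) =
        lam ^ (bdry Λ).card * psiWeight (lam / (1 + lam)) (q : ℝ) Λ (patchB Λ η') := by
    intro η'
    rw [wr_sum_pattern hq hlam Λ η', wr_psiWeight hlam Λ η']
  rw [key η, wr_denom_split lam Λ, Finset.sum_congr rfl fun η' _ => key η',
    ← Finset.mul_sum]
  exact mul_div_mul_left _ _ (pow_ne_zero _ (ne_of_gt hlam))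
end Paper
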